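/- For a skew-symmetric Ω corresponding to ω with ω_c = ‖ω‖ ≠ 0 and h ≠ 0, φ₁(hΩ) = I + ((1 − cos(h ω_c))/(h ω_c²)) Ω + ((h ω_c − sin(h ω_c))/(h ω_c³)) Ω². -/

import Mathlib

open Matrix
open scoped Nat

/-- The skew-symmetric matrix of the cross product with `ω`: `Ω.mulVec p = p ×₃ ω`. -/
def OmegaMat (ω : Fin 3 → ℝ) : Matrix (Fin 3) (Fin 3) ℝ :=
  !![0, ω 2, -(ω 1); -(ω 2), 0, ω 0; ω 1, -(ω 0), 0]

/-- The `ℓ`-th `φ` function of a square matrix, via the entire power series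
`φ_ℓ(A) = ∑_{j≥0} A^j/(j+ℓ)!`. -/
noncomputable def phiMat {n : Type*} [Fintype n] [DecidableEq n]
    (l : ℕ) (A : Matrix n n ℝ) : Matrix n n ℝ :=
  ∑' j : ℕ, (((j + l)! : ℝ))⁻¹ • A ^ j

lemma OmegaMat_cube (ω : Fin 3 → ℝ) :
    (OmegaMat ω) ^ 3 = (-((ω 0)^2 + (ω 1)^2 + (ω 2)^2)) • OmegaMat ω := by
  ext i j
  fin_cases i <;> fin_cases j <;>
    simp [OmegaMat, pow_succ, Matrix.mul_apply, Fin.sum_univ_succ] <;> ring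

lemma OmegaMat_pow_odd (ω : Fin 3 → ℝ) (c : ℝ)
    (hc : (OmegaMat ω) ^ 3 = (-c) • OmegaMat ω) (k : ℕ) :
    (OmegaMat ω) ^ (2 * k + 1) = ((-c) ^ k) • OmegaMat ω := by
  induction k with
  | zero => simp
  | succ k ih =>
    have h1 : 2 * (k + 1) + 1 = (2 * k + 1) + 2 := by ring
    have h3 : OmegaMat ω * OmegaMat ω ^ 2 = (-c) • OmegaMat ω :=
      (pow_succ' (OmegaMat ω) 2).symm.trans hc
    rw [h1, pow_add, ih, smul_mul_assoc, h3, smul_smul, ← pow_succ]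

lemma OmegaMat_pow_even (ω : Fin 3 → ℝ) (c : ℝ)
    (hc : (OmegaMat ω) ^ 3 = (-c) • OmegaMat ω) (k : ℕ) :
    (OmegaMat ω) ^ (2 * k + 2) = ((-c) ^ k) • (OmegaMat ω) ^ 2 := by
  have h1 : 2 * k + 2 = (2 * k + 1) + 1 := rfl
  rw [h1, pow_succ, OmegaMat_pow_odd ω c hc, smul_mul_assoc, ← pow_two]

theorem stmt8 (ω : Fin 3 → ℝ) (h : ℝ) (hh : h ≠ 0)
    (ωc : ℝ) (hωc : ωc = Real.sqrt ((ω 0)^2 + (ω 1)^2 + (ω 2)^2)) (hne : ωc ≠ 0) :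
    phiMat 1 (h • OmegaMat ω) =
      1 + ((1 - Real.cos (h * ωc)) / (h * ωc ^ 2)) • OmegaMat ω
        + ((h * ωc - Real.sin (h * ωc)) / (h * ωc ^ 3)) • (OmegaMat ω) ^ 2 := by
  have hsq : ωc ^ 2 = (ω 0)^2 + (ω 1)^2 + (ω 2)^2 := by
    rw [hωc, Real.sq_sqrt (by positivity)]
  set B := OmegaMat ω with hB
  have hc : B ^ 3 = (-(ωc ^ 2)) • B := by rw [hsq]; exact OmegaMat_cube ω
  set θ := h * ωc with hθ
  have hθ0 : θ ≠ 0 := mul_ne_zero hh hne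
  -- real series for (1 - cos θ)/θ²
  have h1 : HasSum (fun k : ℕ => (-1:ℝ)^k * θ^(2*k) / (2*k+2)!)
      ((1 - Real.cos θ) / θ^2) := by
    have H := (((hasSum_nat_add_iff'
        (f := fun n : ℕ => (-1:ℝ)^n * θ^(2*n) / (2*n)!) 1).mpr
        (Real.hasSum_cos θ)).neg).div_const (θ^2)
    have hfun : (fun k : ℕ => (-1:ℝ)^k * θ^(2*k) / (2*k+2)!)
        = fun k : ℕ => -((-1:ℝ)^(k+1) * θ^(2*(k+1)) / (2*(k+1))!) / θ^2 := by
      funext k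
      have e1 : 2 * (k + 1) = 2 * k + 2 := by ring
      rw [e1]
      have hfac : ((2*k+2)! : ℝ) ≠ 0 := by positivity
      field_simp
      ring
    have hval : (1 - Real.cos θ) / θ^2
        = -(Real.cos θ - ∑ i ∈ Finset.range 1, (-1:ℝ)^i * θ^(2*i) / (2*i)!) / θ^2 := by
      norm_num
    rw [hfun, hval]; exact H
  -- real series for (θ - sin θ)/θ³
  have h2 : HasSum (fun k : ℕ => (-1:ℝ)^k * θ^(2*k) / (2*k+3)!)
      ((θ - Real.sin θ) / θ^3) := by
    have H := (((hasSum_nat_add_iff'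
        (f := fun n : ℕ => (-1:ℝ)^n * θ^(2*n+1) / (2*n+1)!) 1).mpr
        (Real.hasSum_sin θ)).neg).div_const (θ^3)
    have hfun : (fun k : ℕ => (-1:ℝ)^k * θ^(2*k) / (2*k+3)!)
        = fun k : ℕ => -((-1:ℝ)^(k+1) * θ^(2*(k+1)+1) / (2*(k+1)+1)!) / θ^3 := by
      funext k
      have e1 : 2 * (k + 1) + 1 = 2 * k + 3 := by ring
      rw [e1]
      have hfac : ((2*k+3)! : ℝ) ≠ 0 := by positivity
      field_simp
      ring
    have hval : (θ - Real.sin θ) / θ^3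
        = -(Real.sin θ - ∑ i ∈ Finset.range 1, (-1:ℝ)^i * θ^(2*i+1) / (2*i+1)!) / θ^3 := by
      norm_num
    rw [hfun, hval]; exact H
  -- the matrix series
  set g : ℕ → Matrix (Fin 3) (Fin 3) ℝ :=
    fun j => (((j + 1)! : ℝ))⁻¹ • (h • B) ^ j with hg
  have hodd : HasSum (fun k : ℕ => g (2*k+1)) ((h * ((1 - Real.cos θ) / θ^2)) • B) := by
    have hfun : (fun k : ℕ => g (2*k+1))
        = fun k : ℕ => (h * ((-1:ℝ)^k * θ^(2*k) / (2*k+2)!)) • B := by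
      funext k
      rw [hg]
      simp only
      rw [smul_pow, OmegaMat_pow_odd ω (ωc^2) hc, smul_smul, smul_smul]
      congr 1
      have e : (2*k+1+1) = 2*k+2 := rfl
      rw [e, hθ, neg_pow, mul_pow, pow_mul]
      have hfac : ((2*k+2)! : ℝ) ≠ 0 := by positivity
      field_simp
      ring
    rw [hfun]
    exact (h1.mul_left h).smul_const B
  have heven : HasSum (fun k : ℕ => g (2*k+2)) ((h^2 * ((θ - Real.sin θ) / θ^3)) • B^2) := by
    have hfun : (fun k : ℕ => g (2*k+2))
        = fun k : ℕ => (h^2 * ((-1:ℝ)^k * θ^(2*k) / (2*k+3)!)) • B^2 := by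
      funext k
      rw [hg]
      simp only
      rw [smul_pow, OmegaMat_pow_even ω (ωc^2) hc, smul_smul, smul_smul]
      congr 1
      have e : (2*k+2+1) = 2*k+3 := rfl
      rw [e, hθ, neg_pow, mul_pow, pow_mul]
      have hfac : ((2*k+3)! : ℝ) ≠ 0 := by positivity
      field_simp
      ring
    rw [hfun]
    exact (h2.mul_left (h^2)).smul_const (B^2)
  have hcomb : HasSum (fun n : ℕ => g (n+1))
      ((h * ((1 - Real.cos θ) / θ^2)) • B + (h^2 * ((θ - Real.sin θ) / θ^3)) • B^2) :=
    HasSum.even_add_odd (f := fun n => g (n+1)) hodd heven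
  have hfull : HasSum g
      ((h * ((1 - Real.cos θ) / θ^2)) • B + (h^2 * ((θ - Real.sin θ) / θ^3)) • B^2 + 1) := by
    have H := (hasSum_nat_add_iff (f := g) 1).mp hcomb
    simpa [hg] using H
  have hphi : phiMat 1 (h • B) = ∑' j, g j := rfl
  rw [hphi, hfull.tsum_eq]
  have hC1 : h * ((1 - Real.cos θ) / θ^2) = (1 - Real.cos (h * ωc)) / (h * ωc ^ 2) := by
    rw [hθ]; field_simp
  have hC2 : h^2 * ((θ - Real.sin θ) / θ^3) = (h * ωc - Real.sin (h * ωc)) / (h * ωc ^ 3) := by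
    rw [hθ]; field_simp
  rw [hC1, hC2]
  abel
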